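/- Let ρ ∈ (0,1), SNR > 0, δ ∈ [0,1], let N, K, i be positive integers with i ≤ K, set A = (1−ρ)/N, and let β₁ ∈ ℝ^i, β₂ ∈ ℝ^{K−i}. Then ∫_ℝ φ(μ; 0, ρ/N) ∫_ℝ ∫_{ℝ^{K−i}} ( ∏_{k=1}^{K−i} φ((x₂)_k; μ, A) ) · ( ∫_{ℝ^i} ( ∏_{k=1}^{i} φ((x₁)_k; μ, A) ) · φ( y − ⟨x₁, β₁⟩ − ⟨x₂, β₂⟩; 0, 1/SNR )^{1/(1+δ)} dx₁ )^{1+δ} dx₂ dy dμ = ( 1 + (1−ρ)·SNR·‖β₁‖² / (N(1+δ)) )^{−δ/2}. -/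

import Mathlib

open MeasureTheory

noncomputable section

/-- Density of the real Gaussian distribution `N(m, v)` with mean `m` and variance `v`. -/
def gauss (x m v : ℝ) : ℝ := (2 * Real.pi * v) ^ (-(1:ℝ)/2) * Real.exp (-(x - m)^2 / (2*v))

namespace GaussAux

open Real

lemma tpv_pos {v : ℝ} (hv : 0 < v) : 0 < 2 * π * v := by positivity

lemma gauss_eq {v : ℝ} (hv : 0 < v) (x m : ℝ) :
    gauss x m v = (√(2 * π * v))⁻¹ * rexp (-(x - m)^2 / (2*v)) := by
  rw [gauss, neg_div, Real.rpow_neg (tpv_pos hv).le, ← Real.sqrt_eq_rpow, neg_div]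

lemma gauss_eq_pdf {v : ℝ} (hv : 0 < v) (m : ℝ) :
    (fun x => gauss x m v) = ProbabilityTheory.gaussianPDFReal m (⟨v, hv.le⟩ : NNReal) := by
  funext x
  rw [gauss_eq hv]
  rfl

lemma integrable_gauss {v : ℝ} (hv : 0 < v) (m : ℝ) :
    Integrable (fun x => gauss x m v) := by
  rw [gauss_eq_pdf hv]
  exact ProbabilityTheory.integrable_gaussianPDFReal m _

lemma integral_gauss {v : ℝ} (hv : 0 < v) (m : ℝ) : ∫ x, gauss x m v = 1 := by
  rw [gauss_eq_pdf hv]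
  exact ProbabilityTheory.integral_gaussianPDFReal_eq_one m
    (fun h => hv.ne' (congrArg NNReal.toReal h))

lemma gauss_pos {v : ℝ} (hv : 0 < v) (x m : ℝ) : 0 < gauss x m v := by
  rw [gauss_eq hv]
  positivity

lemma gauss_nonneg {v : ℝ} (hv : 0 < v) (x m : ℝ) : 0 ≤ gauss x m v :=
  (gauss_pos hv x m).le

lemma gauss_le {v : ℝ} (hv : 0 < v) (x m : ℝ) : gauss x m v ≤ (√(2 * π * v))⁻¹ := by
  rw [gauss_eq hv]
  apply mul_le_of_le_one_right (by positivity)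
  rw [neg_div]
  exact Real.exp_le_one_iff.mpr (neg_nonpos.mpr (by positivity))

lemma continuous_gauss (m v : ℝ) : Continuous fun x => gauss x m v := by
  unfold gauss
  fun_prop

/-- One-dimensional Gaussian convolution. -/
lemma gauss_conv {v₁ v₂ : ℝ} (hv₁ : 0 < v₁) (hv₂ : 0 < v₂) (m₁ m₂ c z : ℝ) :
    ∫ x, gauss x m₁ v₁ * gauss (z - c*x) m₂ v₂
      = gauss z (m₂ + c*m₁) (v₂ + c^2*v₁) := by
  have hV : 0 < v₂ + c^2*v₁ := by positivity
  have ha0 : 0 < (v₂ + c^2*v₁) / (2*v₁*v₂) := by positivity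
  have h1 := hv₁.ne'
  have h2 := hv₂.ne'
  have h3 := hV.ne'
  have key : ∀ x, gauss x m₁ v₁ * gauss (z - c*x) m₂ v₂
      = ((√(2*π*v₁))⁻¹ * (√(2*π*v₂))⁻¹
          * rexp (-(z - (m₂ + c*m₁))^2 / (2*(v₂ + c^2*v₁))))
        * rexp (-((v₂ + c^2*v₁) / (2*v₁*v₂))
            * (x - (m₁*v₂ + c*v₁*(z - m₂)) / (v₂ + c^2*v₁))^2) := by
    intro x
    rw [gauss_eq hv₁, gauss_eq hv₂]
    have hkey : -(x - m₁)^2/(2*v₁) + -(z - c*x - m₂)^2/(2*v₂)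
        = -(z - (m₂ + c*m₁))^2 / (2*(v₂ + c^2*v₁))
          + -((v₂ + c^2*v₁)/(2*v₁*v₂)) * (x - (m₁*v₂ + c*v₁*(z - m₂))/(v₂ + c^2*v₁))^2 := by
      field_simp
      ring
    rw [mul_mul_mul_comm, ← Real.exp_add, hkey, Real.exp_add]
    ring
  simp_rw [key]
  rw [MeasureTheory.integral_const_mul,
    integral_sub_right_eq_self (fun x => rexp (-((v₂ + c^2*v₁) / (2*v₁*v₂)) * x^2))
      ((m₁*v₂ + c*v₁*(z - m₂)) / (v₂ + c^2*v₁)),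
    integral_gaussian, gauss_eq hV]
  rw [show π / ((v₂ + c^2*v₁) / (2*v₁*v₂)) = (2*π*v₁) * (2*π*v₂) / (2*π*(v₂ + c^2*v₁)) by
    field_simp]
  rw [Real.sqrt_div (by positivity), Real.sqrt_mul (by positivity)]
  have hA : (0:ℝ) < √(2*π*v₁) := Real.sqrt_pos.mpr (tpv_pos hv₁)
  have hB : (0:ℝ) < √(2*π*v₂) := Real.sqrt_pos.mpr (tpv_pos hv₂)
  have hC : (0:ℝ) < √(2*π*(v₂ + c^2*v₁)) := Real.sqrt_pos.mpr (tpv_pos hV)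
  field_simp
  rw [show (2:ℝ)^2*π^2*v₂*v₁ = (2*π*v₁)*(2*π*v₂) by ring, Real.sqrt_mul (x := 2*π*v₁) (by positivity),
    Real.sqrt_mul (x := 2*π) (by positivity) v₁]

/-- Real power of a Gaussian density. -/
lemma gauss_rpow {v p u : ℝ} (hv : 0 < v) (hp : 0 < p) (hu : u = v / p) (z m : ℝ) :
    gauss z m v ^ p
      = ((2*π*v) ^ (-(1:ℝ)/2*p) * (2*π*u) ^ ((1:ℝ)/2)) * gauss z m u := by
  have hu0 : 0 < u := by rw [hu]; positivity
  have h1 : (2*π*u) ^ ((1:ℝ)/2) * (2*π*u) ^ (-(1:ℝ)/2) = 1 := by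
    rw [← Real.rpow_add (tpv_pos hu0)]
    norm_num
  have hexp : -(z-m)^2/(2*v)*p = -(z-m)^2/(2*u) := by
    rw [hu]; field_simp
  calc gauss z m v ^ p
      = (2*π*v) ^ (-(1:ℝ)/2*p) * rexp (-(z-m)^2/(2*v)*p) := by
        rw [gauss, Real.mul_rpow (Real.rpow_nonneg (tpv_pos hv).le _) (Real.exp_nonneg _),
          ← Real.rpow_mul (tpv_pos hv).le, ← Real.exp_mul]
    _ = (2*π*v) ^ (-(1:ℝ)/2*p) * (((2*π*u) ^ ((1:ℝ)/2) * (2*π*u) ^ (-(1:ℝ)/2))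
          * rexp (-(z-m)^2/(2*u))) := by rw [h1, one_mul, hexp]
    _ = ((2*π*v) ^ (-(1:ℝ)/2*p) * (2*π*u) ^ ((1:ℝ)/2))
          * ((2*π*u) ^ (-(1:ℝ)/2) * rexp (-(z-m)^2/(2*u))) := by ring
    _ = _ := by rw [gauss]

/-- Multivariate Gaussian convolution. -/
lemma gauss_conv_pi {A : ℝ} (hA : 0 < A) (μ : ℝ) :
    ∀ (n : ℕ) (β : Fin n → ℝ) (m w : ℝ), 0 < w → ∀ z : ℝ,
    (∫ x : Fin n → ℝ, (∏ k, gauss (x k) μ A) * gauss (z - ∑ k, x k * β k) m w)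
      = gauss z (m + μ * ∑ k, β k) (w + A * ∑ k, β k ^ 2) := by
  intro n
  induction n with
  | zero =>
      intro β m w hw z
      simp only [Finset.univ_eq_empty, Finset.prod_empty, Finset.sum_empty, one_mul,
        sub_zero, mul_zero, add_zero, volume_pi, integral_const, Measure.pi_empty_univ,
        Measure.real, ENNReal.toReal_one, smul_eq_mul, one_mul]
  | succ n ih =>
      intro β m w hw z
      have hmp := (measurePreserving_piFinSuccAbove (fun _ : Fin (n+1) => (volume : Measure ℝ)) 0).symm
      rw [volume_pi, ← hmp.integral_comp']
      simp_rw [MeasurableEquiv.piFinSuccAbove_symm_apply, Fin.insertNthEquiv,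
        Fin.prod_univ_succ, Fin.sum_univ_succ, Fin.insertNth_zero]
      simp only [Equiv.coe_fn_mk, Fin.zero_succAbove, cast_eq, Fin.cons_zero, Fin.cons_succ]
      have hcont : Continuous fun p : ℝ × (Fin n → ℝ) =>
          (gauss p.1 μ A * ∏ k, gauss (p.2 k) μ A) *
            gauss (z - (p.1 * β 0 + ∑ k, p.2 k * β k.succ)) m w :=
        (((continuous_gauss μ A).comp continuous_fst).mul
          (continuous_finset_prod _ fun k _ =>
            (continuous_gauss μ A).comp ((continuous_apply k).comp continuous_snd))).mul
          ((continuous_gauss m w).comp (continuous_const.sub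
            ((continuous_fst.mul continuous_const).add
              (continuous_finset_sum _ fun k _ =>
                ((continuous_apply k).comp continuous_snd).mul continuous_const))))
      have hint : Integrable (fun p : ℝ × (Fin n → ℝ) =>
          (gauss p.1 μ A * ∏ k, gauss (p.2 k) μ A) *
            gauss (z - (p.1 * β 0 + ∑ k, p.2 k * β k.succ)) m w)
          (volume.prod (Measure.pi fun _ => volume)) := by
        have hbd : Integrable (fun p : ℝ × (Fin n → ℝ) =>
            (√(2*π*w))⁻¹ * (gauss p.1 μ A * ∏ k, gauss (p.2 k) μ A))
            (volume.prod (Measure.pi fun _ => volume)) := by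
          apply Integrable.const_mul
          have hp := MeasureTheory.Integrable.fin_nat_prod
            (f := fun (_ : Fin n) (x : ℝ) => gauss x μ A) (fun _ => integrable_gauss hA μ)
          exact Integrable.mul_prod (integrable_gauss hA μ) hp
        refine hbd.mono' hcont.aestronglyMeasurable ?_
        filter_upwards with p
        have h1 : gauss (z - (p.1 * β 0 + ∑ k, p.2 k * β k.succ)) m w ≤ (√(2*π*w))⁻¹ :=
          gauss_le hw _ m
        have h2 : 0 ≤ gauss p.1 μ A * ∏ k, gauss (p.2 k) μ A :=
          mul_nonneg (gauss_nonneg hA _ _) (Finset.prod_nonneg fun k _ => gauss_nonneg hA _ _)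
        rw [Real.norm_of_nonneg (mul_nonneg h2 (gauss_nonneg hw _ _))]
        calc (gauss p.1 μ A * ∏ k, gauss (p.2 k) μ A) *
              gauss (z - (p.1 * β 0 + ∑ k, p.2 k * β k.succ)) m w
            ≤ (gauss p.1 μ A * ∏ k, gauss (p.2 k) μ A) * (√(2*π*w))⁻¹ :=
              mul_le_mul_of_nonneg_left h1 h2
          _ = _ := mul_comm _ _
      rw [MeasureTheory.integral_prod _ hint]
      have hw2 : 0 < w + A * ∑ k : Fin n, β k.succ ^ 2 :=
        add_pos_of_pos_of_nonneg hw
          (mul_nonneg hA.le (Finset.sum_nonneg fun k _ => sq_nonneg _))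
      have hinner : ∀ x₀ : ℝ,
          (∫ xs : Fin n → ℝ, (gauss x₀ μ A * ∏ k, gauss (xs k) μ A) *
            gauss (z - (x₀ * β 0 + ∑ k, xs k * β k.succ)) m w
            ∂(Measure.pi fun _ => volume))
          = gauss x₀ μ A *
              gauss (z - β 0 * x₀) (m + μ * ∑ k : Fin n, β k.succ)
                (w + A * ∑ k : Fin n, β k.succ ^ 2) := by
        intro x₀
        rw [← volume_pi]
        rw [show (fun xs : Fin n → ℝ => (gauss x₀ μ A * ∏ k, gauss (xs k) μ A) *
              gauss (z - (x₀ * β 0 + ∑ k, xs k * β k.succ)) m w)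
            = fun xs => gauss x₀ μ A * ((∏ k, gauss (xs k) μ A) *
              gauss ((z - β 0 * x₀) - ∑ k, xs k * β k.succ) m w) from
          funext fun xs => by rw [mul_comm x₀ (β 0), sub_add_eq_sub_sub]; ring]
        rw [MeasureTheory.integral_const_mul]
        have hih := ih (fun k => β k.succ) m w hw (z - β 0 * x₀)
        rw [hih]
      simp_rw [hinner]
      rw [gauss_conv hA hw2 μ (m + μ * ∑ k : Fin n, β k.succ) (β 0) z]
      congr 1 <;> ring

/-- The constant bookkeeping. -/
lemma const_calc {v q B A' : ℝ} (hv : 0 < v) (hq : 0 < q) (hB : 0 ≤ B) (hA' : 0 < A') :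
    ((2*π*v) ^ (-(1:ℝ)/2*((1:ℝ)/q)) * (2*π*(v*q)) ^ ((1:ℝ)/2)) ^ q *
      ((2*π*(v*q + A'*B)) ^ (-(1:ℝ)/2*q) * (2*π*((v*q + A'*B)/q)) ^ ((1:ℝ)/2))
    = (1 + A'*B/(v*q)) ^ ((1 - q)/2) := by
  have hY : (0:ℝ) < 2*π*v := by positivity
  have hX : (0:ℝ) < 2*π*(v*q) := by positivity
  have huB : (0:ℝ) ≤ A'*B/(v*q) := by positivity
  have hu : (0:ℝ) < 1 + A'*B/(v*q) := by linarith
  have h1 : 2*π*(v*q + A'*B) = (2*π*(v*q)) * (1 + A'*B/(v*q)) := by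
    field_simp
  have h2 : 2*π*((v*q + A'*B)/q) = (2*π*v) * (1 + A'*B/(v*q)) := by
    field_simp
  rw [h1, h2]
  have hL : (0:ℝ) < ((2*π*v) ^ (-(1:ℝ)/2*((1:ℝ)/q)) * (2*π*(v*q)) ^ ((1:ℝ)/2)) ^ q *
      (((2*π*(v*q)) * (1 + A'*B/(v*q))) ^ (-(1:ℝ)/2*q) *
        ((2*π*v) * (1 + A'*B/(v*q))) ^ ((1:ℝ)/2)) := by positivity
  have hR : (0:ℝ) < (1 + A'*B/(v*q)) ^ ((1 - q)/2) := by positivity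
  set u : ℝ := 1 + A'*B/(v*q) with hudef
  set X : ℝ := 2*π*(v*q) with hXdef
  set Y : ℝ := 2*π*v with hYdef
  rw [← Real.exp_log hL, ← Real.exp_log hR]
  congr 1
  rw [Real.log_mul (Real.rpow_pos_of_pos (mul_pos (Real.rpow_pos_of_pos hY _)
        (Real.rpow_pos_of_pos hX _)) q).ne'
      (mul_pos (Real.rpow_pos_of_pos (mul_pos hX hu) _)
        (Real.rpow_pos_of_pos (mul_pos hY hu) _)).ne',
    Real.log_rpow (mul_pos (Real.rpow_pos_of_pos hY _) (Real.rpow_pos_of_pos hX _)),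
    Real.log_mul (Real.rpow_pos_of_pos hY _).ne' (Real.rpow_pos_of_pos hX _).ne',
    Real.log_rpow hY, Real.log_rpow hX,
    Real.log_mul (Real.rpow_pos_of_pos (mul_pos hX hu) _).ne'
      (Real.rpow_pos_of_pos (mul_pos hY hu) _).ne',
    Real.log_rpow (mul_pos hX hu), Real.log_rpow (mul_pos hY hu),
    Real.log_mul hX.ne' hu.ne', Real.log_mul hY.ne' hu.ne', Real.log_rpow hu]
  field_simp
  ring


end GaussAux

theorem statement8 (ρ SNR δ : ℝ) (hρ : ρ ∈ Set.Ioo (0:ℝ) 1) (hSNR : 0 < SNR)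
    (hδ : δ ∈ Set.Icc (0:ℝ) 1) (N K i : ℕ) (hN : 1 ≤ N) (hK : 1 ≤ K)
    (hi1 : 1 ≤ i) (hiK : i ≤ K) (A : ℝ) (hA : A = (1-ρ)/N)
    (β₁ : Fin i → ℝ) (β₂ : Fin (K - i) → ℝ) :
    (∫ μ : ℝ, gauss μ 0 (ρ/N) * ∫ y : ℝ, ∫ x₂ : Fin (K - i) → ℝ,
        (∏ k, gauss (x₂ k) μ A) *
          (∫ x₁ : Fin i → ℝ, (∏ k, gauss (x₁ k) μ A) *
            gauss (y - (∑ k, x₁ k * β₁ k) - (∑ k, x₂ k * β₂ k)) 0 (1/SNR) ^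
              ((1:ℝ)/(1+δ))) ^ (1+δ)) =
    (1 + (1-ρ) * SNR * (∑ k, β₁ k ^ 2) / (N * (1+δ))) ^ (-δ/2) := by
  open GaussAux Real in
  obtain ⟨hρ0, hρ1⟩ := hρ
  obtain ⟨hδ0, -⟩ := hδ
  have hq0 : (0:ℝ) < 1 + δ := by linarith
  have hN0 : (0:ℝ) < (N:ℝ) := by exact_mod_cast hN
  have hA0 : 0 < A := by rw [hA]; exact div_pos (by linarith) hN0
  have hv0 : (0:ℝ) < 1/SNR := by positivity
  have hp0 : (0:ℝ) < (1:ℝ)/(1+δ) := by positivity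
  have hB1 : (0:ℝ) ≤ ∑ k, β₁ k ^ 2 := Finset.sum_nonneg fun k _ => sq_nonneg _
  have hB2 : (0:ℝ) ≤ ∑ k, β₂ k ^ 2 := Finset.sum_nonneg fun k _ => sq_nonneg _
  have hV1 : (0:ℝ) < 1/SNR*(1+δ) := by positivity
  have hW0 : (0:ℝ) < 1/SNR*(1+δ) + A * ∑ k, β₁ k ^ 2 :=
    add_pos_of_pos_of_nonneg hV1 (mul_nonneg hA0.le hB1)
  have hW0' : (0:ℝ) < (1/SNR*(1+δ) + A * ∑ k, β₁ k ^ 2) / (1+δ) := div_pos hW0 hq0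
  set C₁ : ℝ := (2*π*(1/SNR)) ^ (-(1:ℝ)/2*((1:ℝ)/(1+δ)))
      * (2*π*(1/SNR*(1+δ))) ^ ((1:ℝ)/2) with hC₁
  have hC₁0 : 0 ≤ C₁ := by rw [hC₁]; positivity
  set C₂ : ℝ := (2*π*(1/SNR*(1+δ) + A * ∑ k, β₁ k ^ 2)) ^ (-(1:ℝ)/2*(1+δ))
      * (2*π*((1/SNR*(1+δ) + A * ∑ k, β₁ k ^ 2)/(1+δ))) ^ ((1:ℝ)/2) with hC₂
  -- Step 1: the inner x₁-integral
  have h2 : ∀ (μ y : ℝ) (x₂ : Fin (K - i) → ℝ),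
      (∫ x₁ : Fin i → ℝ, (∏ k, gauss (x₁ k) μ A) *
        gauss (y - (∑ k, x₁ k * β₁ k) - (∑ k, x₂ k * β₂ k)) 0 (1/SNR) ^ ((1:ℝ)/(1+δ)))
      = C₁ * gauss (y - ∑ k, x₂ k * β₂ k) (0 + μ * ∑ k, β₁ k)
          (1/SNR*(1+δ) + A * ∑ k, β₁ k ^ 2) := by
    intro μ y x₂
    have hrp : ∀ Z : ℝ, gauss Z 0 (1/SNR) ^ ((1:ℝ)/(1+δ)) = C₁ * gauss Z 0 (1/SNR*(1+δ)) := by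
      intro Z
      rw [gauss_rpow hv0 hp0 (u := 1/SNR*(1+δ)) (by field_simp) Z 0, hC₁]
    simp only [hrp]
    rw [show (∫ x₁ : Fin i → ℝ, (∏ k, gauss (x₁ k) μ A) *
          (C₁ * gauss (y - (∑ k, x₁ k * β₁ k) - (∑ k, x₂ k * β₂ k)) 0 (1/SNR*(1+δ))))
        = C₁ * ∫ x₁ : Fin i → ℝ, (∏ k, gauss (x₁ k) μ A) *
            gauss ((y - ∑ k, x₂ k * β₂ k) - ∑ k, x₁ k * β₁ k) 0 (1/SNR*(1+δ)) from by
      rw [← MeasureTheory.integral_const_mul]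
      congr 1
      funext x₁
      rw [sub_right_comm]
      ring]
    rw [gauss_conv_pi hA0 μ i β₁ 0 (1/SNR*(1+δ)) hV1 (y - ∑ k, x₂ k * β₂ k)]
  -- Step 2: power and the x₂-integral
  have h4 : ∀ (μ y : ℝ),
      (∫ x₂ : Fin (K - i) → ℝ, (∏ k, gauss (x₂ k) μ A) *
        (C₁ * gauss (y - ∑ k, x₂ k * β₂ k) (0 + μ * ∑ k, β₁ k)
          (1/SNR*(1+δ) + A * ∑ k, β₁ k ^ 2)) ^ (1+δ))
      = (C₁ ^ (1+δ) * C₂) * gauss y (0 + μ * ∑ k, β₁ k + μ * ∑ k, β₂ k)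
          ((1/SNR*(1+δ) + A * ∑ k, β₁ k ^ 2)/(1+δ) + A * ∑ k, β₂ k ^ 2) := by
    intro μ y
    have hrp2 : ∀ Z m' : ℝ,
        (C₁ * gauss Z m' (1/SNR*(1+δ) + A * ∑ k, β₁ k ^ 2)) ^ (1+δ)
        = (C₁ ^ (1+δ) * C₂) * gauss Z m'
            ((1/SNR*(1+δ) + A * ∑ k, β₁ k ^ 2)/(1+δ)) := by
      intro Z m'
      rw [Real.mul_rpow hC₁0 (gauss_nonneg hW0 _ _),
        gauss_rpow hW0 hq0 (u := (1/SNR*(1+δ) + A * ∑ k, β₁ k ^ 2)/(1+δ)) rfl Z m', hC₂]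
      ring
    simp only [hrp2]
    rw [show (∫ x₂ : Fin (K - i) → ℝ, (∏ k, gauss (x₂ k) μ A) *
          ((C₁ ^ (1+δ) * C₂) * gauss (y - ∑ k, x₂ k * β₂ k) (0 + μ * ∑ k, β₁ k)
            ((1/SNR*(1+δ) + A * ∑ k, β₁ k ^ 2)/(1+δ))))
        = (C₁ ^ (1+δ) * C₂) * ∫ x₂ : Fin (K - i) → ℝ, (∏ k, gauss (x₂ k) μ A) *
            gauss (y - ∑ k, x₂ k * β₂ k) (0 + μ * ∑ k, β₁ k)
              ((1/SNR*(1+δ) + A * ∑ k, β₁ k ^ 2)/(1+δ)) from by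
      rw [← MeasureTheory.integral_const_mul]
      congr 1
      funext x₂
      ring]
    rw [gauss_conv_pi hA0 μ (K - i) β₂ (0 + μ * ∑ k, β₁ k) _ hW0' y]
  -- Step 3: the y-integral
  have h5 : ∀ μ : ℝ,
      (∫ y : ℝ, (C₁ ^ (1+δ) * C₂) * gauss y (0 + μ * ∑ k, β₁ k + μ * ∑ k, β₂ k)
        ((1/SNR*(1+δ) + A * ∑ k, β₁ k ^ 2)/(1+δ) + A * ∑ k, β₂ k ^ 2))
      = C₁ ^ (1+δ) * C₂ := by
    intro μ
    rw [MeasureTheory.integral_const_mul,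
      integral_gauss (add_pos_of_pos_of_nonneg hW0' (mul_nonneg hA0.le hB2)) _, mul_one]
  simp only [h2, h4, h5]
  rw [MeasureTheory.integral_mul_const, integral_gauss (by positivity : (0:ℝ) < ρ/(N:ℝ)) 0,
    one_mul]
  -- Step 4: the constant
  have hcc := const_calc (v := 1/SNR) (q := 1+δ) (B := ∑ k, β₁ k ^ 2) (A' := A)
    hv0 hq0 hB1 hA0
  rw [hC₁, hC₂, hcc]
  rw [show (1:ℝ) + A * (∑ k, β₁ k ^ 2) / (1/SNR*(1+δ))
      = 1 + (1-ρ) * SNR * (∑ k, β₁ k ^ 2) / (N * (1+δ)) from by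
    rw [hA]; field_simp]
  norm_num
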